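/- arXiv:2303.09633 — 2 statements merged into one kernel-verified Lean document; each statement's English description precedes it below -/
import Mathlib

section
/- Let $G$ be a finitely generated group and $k \geq 2$. If the quotient $\gamma_k(G)/\gamma_{k+1}(G)$ is finitely generated and the abelianization $G^{\mathrm{ab}}$ is finite, then $\gamma_{k-1}(G)/\gamma_k(G)$ is a finitely generated torsion abelian group, hence finite, provided it is finitely generated. -/
section Aux

open scoped commutatorElement

variable {G : Type*} [Group G]

/-- If every value `⁅a, z⁆` is central, then `z ↦ ⁅a, z⁆` is a homomorphism. -/
private def commHom (a : G) (ha : ∀ z : G, ⁅a, z⁆ ∈ Subgroup.center G) : G →* G where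
  toFun z := ⁅a, z⁆
  map_one' := by simp
  map_mul' z w := by
    show ⁅a, z * w⁆ = ⁅a, z⁆ * ⁅a, w⁆
    have h1 : ⁅a, z * w⁆ = ⁅a, z⁆ * (z * ⁅a, w⁆ * z⁻¹) := by
      simp only [commutatorElement_def]; group
    have h2 : z * ⁅a, w⁆ = ⁅a, w⁆ * z := (Subgroup.mem_center_iff.mp (ha w) z)
    rw [h1, h2]
    group

/-- Elements of `γ_{n+1}` are central modulo `γ_{n+2}`. -/
private lemma central_mod (n : ℕ) {u : G} (hu : u ∈ (⊤ : Subgroup G).lowerCentralSeries (n + 1)) :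
    (QuotientGroup.mk u : G ⧸ (⊤ : Subgroup G).lowerCentralSeries (n + 2)) ∈
      Subgroup.center (G ⧸ (⊤ : Subgroup G).lowerCentralSeries (n + 2)) := by
  rw [Subgroup.mem_center_iff]
  intro z
  induction z using QuotientGroup.induction_on with
  | H g =>
    have : ⁅u, g⁆ ∈ (⊤ : Subgroup G).lowerCentralSeries (n + 2) := by
      rw [lowerCentralSeries_succ]
      exact Subgroup.commutator_mem_commutator hu (Subgroup.mem_top g)
    have h1 : (QuotientGroup.mk ⁅u, g⁆ : G ⧸ (⊤ : Subgroup G).lowerCentralSeries (n + 2)) = 1 :=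
      (QuotientGroup.eq_one_iff _).mpr this
    have h2 : ⁅(QuotientGroup.mk u : G ⧸ (⊤ : Subgroup G).lowerCentralSeries (n + 2)), (QuotientGroup.mk g : G ⧸ (⊤ : Subgroup G).lowerCentralSeries (n + 2))⁆ = 1 := by
      rw [← h1]; simp [commutatorElement_def]; rfl
    exact (commutatorElement_eq_one_iff_commute.mp h2).symm.eq

/-- If `g ^ m ∈ γ_1` for all `g`, then `x ^ m ∈ γ_{n+1}` for all `x ∈ γ_n`. -/
private lemma pow_mem_succ {m : ℕ} (hm : ∀ g : G, g ^ m ∈ (⊤ : Subgroup G).lowerCentralSeries 1) :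
    ∀ n : ℕ, ∀ x ∈ (⊤ : Subgroup G).lowerCentralSeries n, x ^ m ∈ (⊤ : Subgroup G).lowerCentralSeries (n + 1) := by
  intro n
  match n with
  | 0 => exact fun x _ => hm x
  | n + 1 =>
    intro x hx
    set N := (⊤ : Subgroup G).lowerCentralSeries (n + 2) with hN
    let H := G ⧸ N
    let π : G →* H := QuotientGroup.mk' N
    -- the subgroup of central elements killed by `m`
    let T : Subgroup H :=
      { carrier := {z | z ∈ Subgroup.center H ∧ z ^ m = 1}
        one_mem' := ⟨Subgroup.one_mem _, one_pow m⟩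
        mul_mem' := by
          rintro z w ⟨hz, hz1⟩ ⟨hw, hw1⟩
          refine ⟨Subgroup.mul_mem _ hz hw, ?_⟩
          have hcomm : Commute z w := (Subgroup.mem_center_iff.mp hz w).symm
          rw [hcomm.mul_pow, hz1, hw1, one_mul]
        inv_mem' := by
          rintro z ⟨hz, hz1⟩
          exact ⟨Subgroup.inv_mem _ hz, by rw [inv_pow, hz1, inv_one]⟩ }
    -- images of generators of `γ_{n+1}` lie in `T`
    have key : ∀ y ∈ (⊤ : Subgroup G).lowerCentralSeries n, ∀ g : G, π ⁅y, g⁆ ∈ T := by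
      intro y hy g
      have ha : ∀ z : H, ⁅π y, z⁆ ∈ Subgroup.center H := by
        intro z
        induction z using QuotientGroup.induction_on with
        | H g' =>
          have : ⁅y, g'⁆ ∈ (⊤ : Subgroup G).lowerCentralSeries (n + 1) := by
            rw [lowerCentralSeries_succ]
            exact Subgroup.commutator_mem_commutator hy (Subgroup.mem_top g')
          have := central_mod n this
          have h : ⁅π y, π g'⁆ = π ⁅y, g'⁆ := (map_commutatorElement π y g').symm
          rw [show (QuotientGroup.mk g' : H) = π g' from rfl, h]
          exact this
      constructor
      · have : ⁅y, g⁆ ∈ (⊤ : Subgroup G).lowerCentralSeries (n + 1) := by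
          rw [lowerCentralSeries_succ]
          exact Subgroup.commutator_mem_commutator hy (Subgroup.mem_top g)
        exact central_mod n this
      · -- `(π ⁅y, g⁆) ^ m = 1`
        let f := commHom (π y) ha
        have hfg : π ⁅y, g⁆ = f (π g) := by
          simp [f, commHom, map_commutatorElement]
        have h1 : (π ⁅y, g⁆) ^ m = f (π (g ^ m)) := by
          rw [hfg, ← map_pow, ← map_pow]
        -- `f` kills commutators since its image is central
        have hker : ∀ w ∈ commutator G, f (π w) = 1 := by
          have hle : commutator H ≤ f.ker := by
            rw [commutator_def, Subgroup.commutator_le]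
            intro a _ b _
            rw [MonoidHom.mem_ker, map_commutatorElement]
            exact commutatorElement_eq_one_iff_commute.mpr
              ((Subgroup.mem_center_iff.mp (ha a) (f b)).symm)
          intro w hw
          apply hle
          have : π w ∈ Subgroup.map π (commutator G) := Subgroup.mem_map_of_mem π hw
          rw [commutator_def, Subgroup.map_commutator] at this
          exact (Subgroup.commutator_mono le_top le_top) this
        rw [h1]
        exact hker (g ^ m) (hm g)
    -- now `x ∈ γ_{n+1} = ⁅γ_n, ⊤⁆`, so `π x ∈ T`
    have hcomm : (⊤ : Subgroup G).lowerCentralSeries (n + 1) = ⁅(⊤ : Subgroup G).lowerCentralSeries n, ⊤⁆ := by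
      rw [lowerCentralSeries_succ]
    have hmap : Subgroup.map π ((⊤ : Subgroup G).lowerCentralSeries (n + 1)) ≤ T := by
      rw [hcomm, Subgroup.map_commutator, Subgroup.commutator_le]
      rintro a ⟨y, hy, rfl⟩ b ⟨g, -, rfl⟩
      rw [← map_commutatorElement]
      exact key y hy g
    have hx' : π x ∈ T := hmap (Subgroup.mem_map_of_mem π hx)
    have h5 : π (x ^ m) = 1 := by rw [map_pow]; exact hx'.2
    exact (QuotientGroup.eq_one_iff _).mp h5

/-- Main auxiliary lemma: a f.g. quotient `γ_n / γ_{n+1}` is finite when there is `m > 0`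
with `x ^ m ∈ γ_{n+1}` for all `x ∈ γ_n`. -/
private lemma finite_quotient_of_pow {n m : ℕ} (hm : 0 < m)
    (hpow : ∀ x ∈ (⊤ : Subgroup G).lowerCentralSeries n, x ^ m ∈ (⊤ : Subgroup G).lowerCentralSeries (n + 1))
    (hfg : Group.FG
      (((⊤ : Subgroup G).lowerCentralSeries n) ⧸
        ((⊤ : Subgroup G).lowerCentralSeries (n + 1)).subgroupOf ((⊤ : Subgroup G).lowerCentralSeries n))) :
    Finite
      (((⊤ : Subgroup G).lowerCentralSeries n) ⧸
        ((⊤ : Subgroup G).lowerCentralSeries (n + 1)).subgroupOf ((⊤ : Subgroup G).lowerCentralSeries n)) := by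
  set K := ((⊤ : Subgroup G).lowerCentralSeries (n + 1)).subgroupOf ((⊤ : Subgroup G).lowerCentralSeries n) with hK
  letI : CommGroup (((⊤ : Subgroup G).lowerCentralSeries n) ⧸ K) :=
    { (inferInstance : Group (((⊤ : Subgroup G).lowerCentralSeries n) ⧸ K)) with
      mul_comm := by
        intro a b
        induction a using QuotientGroup.induction_on with
        | H x =>
        induction b using QuotientGroup.induction_on with
        | H y =>
          rw [← QuotientGroup.mk_mul, ← QuotientGroup.mk_mul, QuotientGroup.eq]
          rw [Subgroup.mem_subgroupOf]
          have : ((x * y)⁻¹ * (y * x) : (⊤ : Subgroup G).lowerCentralSeries n) = ⁅y⁻¹, x⁻¹⁆ := by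
            simp [commutatorElement_def, mul_assoc]
          rw [this]
          have : ((⁅y⁻¹, x⁻¹⁆ : (⊤ : Subgroup G).lowerCentralSeries n) : G) = ⁅(y⁻¹ : G), (x⁻¹ : G)⁆ := rfl
          rw [this, lowerCentralSeries_succ]
          exact Subgroup.commutator_mem_commutator (y⁻¹).2 (Subgroup.mem_top _) }
  have htor : Monoid.IsTorsion (((⊤ : Subgroup G).lowerCentralSeries n) ⧸ K) := by
    intro q
    induction q using QuotientGroup.induction_on with
    | H x =>
      rw [isOfFinOrder_iff_pow_eq_one]
      refine ⟨m, hm, ?_⟩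
      rw [← QuotientGroup.mk_pow, QuotientGroup.eq_one_iff, Subgroup.mem_subgroupOf]
      have : ((x ^ m : (⊤ : Subgroup G).lowerCentralSeries n) : G) = (x : G) ^ m := rfl
      rw [this]
      exact hpow x x.2
  haveI := hfg
  exact CommGroup.finite_of_fg_torsion _ htor

end Aux

/-- If `G` is a finitely generated group, `k ≥ 2`, the quotient `γ_k(G)/γ_{k+1}(G)` is
finitely generated, the abelianization `Gᵃᵇ` is finite, and `γ_{k-1}(G)/γ_k(G)` is
finitely generated, then `γ_{k-1}(G)/γ_k(G)` is finite (being a finitely generated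
torsion abelian group).  Here `γ_i(G) = (⊤ : Subgroup G).lowerCentralSeries (i-1)`. -/
theorem gamma_quotient_finite {G : Type*} [Group G] (hfg : Group.FG G) (k : ℕ) (hk : 2 ≤ k)
    (hfgk : Group.FG
      (((⊤ : Subgroup G).lowerCentralSeries (k - 1)) ⧸
        ((⊤ : Subgroup G).lowerCentralSeries k).subgroupOf ((⊤ : Subgroup G).lowerCentralSeries (k - 1))))
    (hab : Finite (Abelianization G))
    (hfgk1 : Group.FG
      (((⊤ : Subgroup G).lowerCentralSeries (k - 2)) ⧸
        ((⊤ : Subgroup G).lowerCentralSeries (k - 1)).subgroupOf ((⊤ : Subgroup G).lowerCentralSeries (k - 2)))) :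
    Finite
      (((⊤ : Subgroup G).lowerCentralSeries (k - 2)) ⧸
        ((⊤ : Subgroup G).lowerCentralSeries (k - 1)).subgroupOf ((⊤ : Subgroup G).lowerCentralSeries (k - 2))) := by
  obtain ⟨n, rfl⟩ : ∃ n, k = n + 2 := ⟨k - 2, by omega⟩
  have h1 : n + 2 - 1 = n + 1 := by omega
  have h2 : n + 2 - 2 = n := by omega
  rw [h1, h2] at hfgk1 ⊢
  set m := Nat.card (Abelianization G) with hmdef
  have hm : 0 < m := Nat.card_pos
  have hA : ∀ g : G, g ^ m ∈ (⊤ : Subgroup G).lowerCentralSeries 1 := by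
    intro g
    have h1 : Abelianization.of (g ^ m) = 1 := by
      rw [map_pow]; exact pow_card_eq_one'
    rw [lowerCentralSeries_one]
    exact (QuotientGroup.eq_one_iff _).mp h1
  exact finite_quotient_of_pow hm (pow_mem_succ hA n) hfgk1
end

section
/- Let $G$ be a group and $n \geq 1$ such that every subgroup of $G$ is finitely generated and $G$ is solvable (so $G$ is polycyclic), and let $1 \to N \to H \to G \to 1$ be an extension with $N \leq Z_n(H)$. Then $\gamma_{n+1}(H)$ is an extension of an abelian group by a polycyclic group; in particular, if additionally $\gamma_{n+1}(H) \cap N$ is finitely generated, then $\gamma_{n+1}(H)$ is polycyclic. -/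
/-- A group is polycyclic iff it is solvable and all its subgroups are finitely generated. -/
def IsPolycyclic (G : Type*) [Group G] : Prop :=
  IsSolvable G ∧ ∀ H : Subgroup G, H.FG

section Helpers

variable {G : Type*} [Group G]

/-- The three subgroups lemma with a normal subgroup as target. -/
theorem my_three_subgroups {A B C N : Subgroup G} [N.Normal]
    (h1 : ⁅⁅B, C⁆, A⁆ ≤ N) (h2 : ⁅⁅C, A⁆, B⁆ ≤ N) : ⁅⁅A, B⁆, C⁆ ≤ N := by
  have key : ∀ X Y Z : Subgroup G, ⁅⁅X, Y⁆, Z⁆ ≤ N ↔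
      ⁅⁅X.map (QuotientGroup.mk' N), Y.map (QuotientGroup.mk' N)⁆,
        Z.map (QuotientGroup.mk' N)⁆ = ⊥ := by
    intro X Y Z
    rw [← Subgroup.map_commutator, ← Subgroup.map_commutator, Subgroup.map_eq_bot_iff,
      QuotientGroup.ker_mk']
  exact (key _ _ _).mpr
    (Subgroup.commutator_commutator_eq_bot_of_rotate ((key _ _ _).mp h1) ((key _ _ _).mp h2))

theorem uc_comm_top (j : ℕ) :
    ⁅upperCentralSeries G j, (⊤ : Subgroup G)⁆ ≤ upperCentralSeries G (j - 1) := by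
  cases j with
  | zero =>
    rw [show upperCentralSeries G 0 = ⊥ from rfl, Subgroup.commutator_bot_left]
  | succ k =>
    rw [Subgroup.commutator_le]
    intro x hx y _
    exact hx y

theorem lc_uc_le (i j : ℕ) :
    ⁅(⊤ : Subgroup G).lowerCentralSeries i, upperCentralSeries G j⁆ ≤ upperCentralSeries G (j - i) := by
  induction i generalizing j with
  | zero =>
    rw [Nat.sub_zero]
    haveI : (upperCentralSeries G j).Normal := inferInstanceAs (Subgroup.upperCentralSeries G j).Normal
    exact Subgroup.commutator_le_right _ _
  | succ i ih =>
    show ⁅⁅(⊤ : Subgroup G).lowerCentralSeries i, ⊤⁆, upperCentralSeries G j⁆ ≤ _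
    haveI : (upperCentralSeries G (j - (i + 1))).Normal :=
      inferInstanceAs (Subgroup.upperCentralSeries G _).Normal
    apply my_three_subgroups
    · calc ⁅⁅(⊤ : Subgroup G), upperCentralSeries G j⁆, (⊤ : Subgroup G).lowerCentralSeries i⁆
          ≤ ⁅upperCentralSeries G (j - 1), (⊤ : Subgroup G).lowerCentralSeries i⁆ :=
            Subgroup.commutator_mono
              (by rw [Subgroup.commutator_comm]; exact uc_comm_top j) le_rfl
        _ = ⁅(⊤ : Subgroup G).lowerCentralSeries i, upperCentralSeries G (j - 1)⁆ :=
            Subgroup.commutator_comm _ _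
        _ ≤ upperCentralSeries G ((j - 1) - i) := ih (j - 1)
        _ = upperCentralSeries G (j - (i + 1)) := by congr 1 <;> omega
    · calc ⁅⁅upperCentralSeries G j, (⊤ : Subgroup G).lowerCentralSeries i⁆, (⊤ : Subgroup G)⁆
          ≤ ⁅upperCentralSeries G (j - i), ⊤⁆ :=
            Subgroup.commutator_mono
              (by rw [Subgroup.commutator_comm]; exact ih j) le_rfl
        _ ≤ upperCentralSeries G ((j - i) - 1) := uc_comm_top _
        _ = upperCentralSeries G (j - (i + 1)) := by congr 1 <;> omega

theorem lc_uc_commute {x y : G} {n : ℕ} (hx : x ∈ (⊤ : Subgroup G).lowerCentralSeries n)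
    (hy : y ∈ upperCentralSeries G n) : x * y = y * x := by
  have h := lc_uc_le (G := G) n n
  rw [Nat.sub_self, show upperCentralSeries G 0 = ⊥ from rfl] at h
  have h2 := h (Subgroup.commutator_mem_commutator hx hy)
  rwa [Subgroup.mem_bot, commutatorElement_eq_one_iff_mul_comm] at h2

theorem my_fg_map {G H : Type*} [Group G] [Group H] {S : Subgroup G} (h : S.FG) (f : G →* H) :
    (S.map f).FG := by
  classical
  obtain ⟨T, hT⟩ := h
  refine ⟨T.image f, ?_⟩
  rw [Finset.coe_image, ← MonoidHom.map_closure, hT]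

theorem isPolycyclic_of_injective {K G : Type*} [Group K] [Group G]
    (hsub : ∀ S : Subgroup G, S.FG) (hsol : IsSolvable G) (f : K →* G)
    (hf : Function.Injective f) : IsPolycyclic K := by
  haveI : Group.IsSolvable G := hsol
  refine ⟨solvable_of_solvable_injective hf, fun S => ?_⟩
  rw [← Group.fg_iff_subgroup_fg]
  haveI : Group.FG (S.map f) := (Group.fg_iff_subgroup_fg _).mpr (hsub _)
  exact Group.fg_of_surjective (f := (S.equivMapOfInjective f hf).symm.toMonoidHom) (S.equivMapOfInjective f hf).symm.surjective

/-- Subgroups of a finitely generated abelian subgroup are finitely generated. -/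
theorem fg_of_le_of_comm {G : Type*} [Group G] {A B : Subgroup G}
    (hc : ∀ x y : A, x * y = y * x) (hA : A.FG) (hBA : B ≤ A) : B.FG := by
  letI : CommGroup A := { (inferInstance : Group A) with mul_comm := fun a b => hc a b }
  haveI hfg : Group.FG A := (Group.fg_iff_subgroup_fg A).mpr hA
  haveI : Module.Finite ℤ (Additive A) := Module.Finite.iff_addGroup_fg.mpr inferInstance
  have key : (B.subgroupOf A).FG := by
    have h := IsNoetherian.noetherian (R := ℤ) (M := Additive A)
      (AddSubgroup.toIntSubmodule (B.subgroupOf A).toAddSubgroup)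
    rw [Submodule.fg_iff_addSubgroup_fg, AddSubgroup.toIntSubmodule_toAddSubgroup] at h
    exact (Subgroup.fg_iff_add_fg _).mpr h
  have := my_fg_map key A.subtype
  rwa [Subgroup.subgroupOf_map_subtype, inf_eq_left.mpr hBA] at this

/-- Finite generation of groups is closed under extensions. -/
theorem group_fg_of_fg_of_fg {K : Type*} [Group K] (N : Subgroup K) [N.Normal]
    (hN : N.FG) (hQ : Group.FG (K ⧸ N)) : Group.FG K := by
  obtain ⟨S, hS⟩ := hN
  obtain ⟨T, hT⟩ := Group.fg_def.mp hQ
  choose g hg using QuotientGroup.mk'_surjective N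
  rw [Group.fg_iff]
  refine ⟨↑S ∪ g '' ↑T, ?_, S.finite_toSet.union (T.finite_toSet.image g)⟩
  rw [eq_top_iff]
  rintro k -
  have h1 : (QuotientGroup.mk' N) '' (g '' ↑T) = ↑T := by
    ext x
    constructor
    · rintro ⟨y, ⟨t, ht, rfl⟩, rfl⟩; rw [hg]; exact ht
    · intro hx; exact ⟨g x, ⟨x, hx, rfl⟩, hg x⟩
  have h2 : QuotientGroup.mk' N k ∈ (Subgroup.closure (g '' ↑T)).map (QuotientGroup.mk' N) := by
    rw [MonoidHom.map_closure, h1, hT]; trivial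
  obtain ⟨t, ht, htk⟩ := h2
  have hkt : k * t⁻¹ ∈ N := by
    have h3 : QuotientGroup.mk' N (k * t⁻¹) = 1 := by
      rw [map_mul, map_inv, htk, mul_inv_cancel]
    rwa [← QuotientGroup.ker_mk' N, MonoidHom.mem_ker]
  have hmem1 : k * t⁻¹ ∈ Subgroup.closure (↑S ∪ g '' ↑T) :=
    Subgroup.closure_mono Set.subset_union_left (by rw [hS]; exact hkt)
  have hmem2 : t ∈ Subgroup.closure (↑S ∪ g '' ↑T) :=
    Subgroup.closure_mono Set.subset_union_right ht
  have := mul_mem hmem1 hmem2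
  rwa [inv_mul_cancel_right] at this

/-- A group with abelian f.g. kernel mapping to a polycyclic group is polycyclic. -/
theorem isPolycyclic_of_ker {L Q : Type*} [Group L] [Group Q] (φ : L →* Q)
    (hc : ∀ x y : φ.ker, x * y = y * x) (hfg : φ.ker.FG) (hpoly : IsPolycyclic Q) :
    IsPolycyclic L := by
  obtain ⟨hsolQ, hsubQ⟩ := hpoly
  haveI : Group.IsSolvable Q := hsolQ
  constructor
  · haveI : Group.IsSolvable φ.ker := isSolvable_of_comm hc
    exact solvable_of_ker_le_range φ.ker.subtype φ (by rw [Subgroup.range_subtype])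
  · intro K
    rw [← Group.fg_iff_subgroup_fg]
    set ψ := φ.comp K.subtype with hψ
    apply group_fg_of_fg_of_fg ψ.ker
    · -- kernel of ψ is f.g.
      have hle : ψ.ker.map K.subtype ≤ φ.ker := by
        rintro _ ⟨x, hx, rfl⟩
        exact hx
      have hB : (ψ.ker.map K.subtype).FG := fg_of_le_of_comm hc hfg hle
      haveI : Group.FG (ψ.ker.map K.subtype) := (Group.fg_iff_subgroup_fg _).mpr hB
      exact (Group.fg_iff_subgroup_fg _).mp (Group.fg_of_surjective
        (f := (ψ.ker.equivMapOfInjective K.subtype K.subtype_injective).symm.toMonoidHom)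
        (ψ.ker.equivMapOfInjective K.subtype K.subtype_injective).symm.surjective)
    · -- quotient is f.g.
      haveI : Group.FG ψ.range := (Group.fg_iff_subgroup_fg _).mpr (hsubQ _)
      exact Group.fg_of_surjective (f := (QuotientGroup.quotientKerEquivRange ψ).symm.toMonoidHom)
        (QuotientGroup.quotientKerEquivRange ψ).symm.surjective

end Helpers

/-- Let `G` be polycyclic (solvable with every subgroup finitely generated), `n ≥ 1`,
and `1 → N → H → G → 1` an extension with `N = ker π ≤ Z_n(H)`.  Then
`γ_{n+1}(H) = lowerCentralSeries H n` is an extension of an abelian group by a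
polycyclic group; in particular, if additionally `γ_{n+1}(H) ∩ N` is finitely
generated, then `γ_{n+1}(H)` is polycyclic. -/
theorem gamma_polycyclic_of_n_central_extension {H G : Type*} [Group H] [Group G]
    (hsub : ∀ K : Subgroup G, K.FG) (hsol : IsSolvable G) (n : ℕ) (hn : 1 ≤ n)
    (π : H →* G) (hπ : Function.Surjective π) (hker : π.ker ≤ upperCentralSeries H n) :
    (∃ (A : Subgroup ((⊤ : Subgroup H).lowerCentralSeries n)) (_ : A.Normal),
        (∀ x y : A, x * y = y * x) ∧ IsPolycyclic (((⊤ : Subgroup H).lowerCentralSeries n) ⧸ A)) ∧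
      (Subgroup.FG (π.ker.subgroupOf ((⊤ : Subgroup H).lowerCentralSeries n)) →
        IsPolycyclic ((⊤ : Subgroup H).lowerCentralSeries n)) := by
  set L := (⊤ : Subgroup H).lowerCentralSeries n with hL
  set φ : L →* G := π.comp L.subtype with hφ
  have hkerφ : φ.ker = π.ker.subgroupOf L := rfl
  have hcomm : ∀ x y : (π.ker.subgroupOf L), x * y = y * x := by
    rintro ⟨⟨x, hxL⟩, hx⟩ ⟨⟨y, hyL⟩, hy⟩
    have : x * y = y * x := lc_uc_commute hxL (hker hy)
    exact Subtype.ext (Subtype.ext this)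
  constructor
  · refine ⟨π.ker.subgroupOf L, inferInstance, hcomm, ?_⟩
    exact isPolycyclic_of_injective hsub hsol (QuotientGroup.kerLift φ)
      (QuotientGroup.kerLift_injective φ)
  · intro hfg
    exact isPolycyclic_of_ker φ hcomm hfg ⟨hsol, hsub⟩
end
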